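/- Let F be a presheaf of sets on a category C with pullbacks, and suppose for objects the square associated to a morphism f : X → Y and a 'closed decomposition' Z → Y with E = X ×_Y Z satisfies: F(Y) is the equalizer of F(X) ⇉ F(X ×_Y X), and the natural map F(X ×_Y X) → F(X) × F(E ×_Z E) induced by the diagonal component and restriction is such that the two pullbacks to F(E ×_Z E) of any a ∈ F(X) whose restriction to F(E) is pulled back from F(Z) agree. Then the square F(Y) → F(X), F(Y) → F(Z), both restricting to F(E), is a pullback square of sets: F(Y) ≅ F(X) ×_{F(E)} F(Z). -/
import Mathlib


open CategoryTheory CategoryTheory.Limits Opposite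

/-- The canonical morphism `E ×_Z E ⟶ X ×_Y X`, where `E = X ×_Y Z` for `f : X ⟶ Y`,
`z : Z ⟶ Y`. -/
noncomputable def deltaEZ {C : Type u} [Category.{v} C] [HasPullbacks C]
    {X Y Z : C} (f : X ⟶ Y) (z : Z ⟶ Y) :
    pullback (pullback.snd f z) (pullback.snd f z) ⟶ pullback f f :=
  pullback.lift
    (pullback.fst (pullback.snd f z) (pullback.snd f z) ≫ pullback.fst f z)
    (pullback.snd (pullback.snd f z) (pullback.snd f z) ≫ pullback.fst f z)
    (by
      have h := pullback.condition (f := f) (g := z)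
      have h' := pullback.condition (f := pullback.snd f z) (g := pullback.snd f z)
      simp only [Category.assoc, h]
      rw [← Category.assoc, h', Category.assoc])

/-- Descent along an abstract blowup square.  Let `F` be a presheaf of sets on a category
with pullbacks, `f : X ⟶ Y` and `z : Z ⟶ Y` morphisms, `E = X ×_Y Z`.  Assume:
(1) `F` satisfies Čech descent along `f` (`F Y` is the equalizer of `F X ⇉ F (X ×_Y X)`);
(2) `F Z → F E` is injective;
(3) agreement of sections of `F` on `X ×_Y X` may be checked after restriction along the
diagonal `X → X ×_Y X` and along `E ×_Z E → X ×_Y X` (these restrictions are jointly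
injective).
Then the square is cartesian: `F Y ≅ F X ×_{F E} F Z`. -/
theorem stmt19 {C : Type u} [Category.{v} C] [HasPullbacks C] (F : Cᵒᵖ ⥤ Type w)
    {X Y Z : C} (f : X ⟶ Y) (z : Z ⟶ Y)
    (h1 : ∀ b : F.obj (op X),
      F.map (pullback.fst f f).op b = F.map (pullback.snd f f).op b →
        ∃! a : F.obj (op Y), F.map f.op a = b)
    (h2 : Function.Injective (F.map (pullback.snd f z).op))
    (h3 : ∀ c c' : F.obj (op (pullback f f)),
      F.map (pullback.lift (𝟙 X) (𝟙 X) rfl).op c = F.map (pullback.lift (𝟙 X) (𝟙 X) rfl).op c' →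
      F.map (deltaEZ f z).op c = F.map (deltaEZ f z).op c' →
      c = c') :
    ∀ (a : F.obj (op X)) (b : F.obj (op Z)),
      F.map (pullback.fst f z).op a = F.map (pullback.snd f z).op b →
        ∃! y : F.obj (op Y), F.map f.op y = a ∧ F.map z.op y = b := by

  intro a b hab
  -- Show a equalizes the two projections of X ×_Y X
  have key : F.map (pullback.fst f f).op a = F.map (pullback.snd f f).op a := by
    apply h3
    · have h1e : pullback.lift (𝟙 X) (𝟙 X) rfl ≫ pullback.fst f f = 𝟙 X :=
        pullback.lift_fst _ _ _
      have h2e : pullback.lift (𝟙 X) (𝟙 X) rfl ≫ pullback.snd f f = 𝟙 X :=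
        pullback.lift_snd _ _ _
      rw [← FunctorToTypes.map_comp_apply, ← FunctorToTypes.map_comp_apply,
        ← op_comp, ← op_comp, h1e, h2e]
    · have d1 : deltaEZ f z ≫ pullback.fst f f =
          pullback.fst (pullback.snd f z) (pullback.snd f z) ≫ pullback.fst f z :=
        pullback.lift_fst _ _ _
      have d2 : deltaEZ f z ≫ pullback.snd f f =
          pullback.snd (pullback.snd f z) (pullback.snd f z) ≫ pullback.fst f z :=
        pullback.lift_snd _ _ _
      rw [← FunctorToTypes.map_comp_apply, ← FunctorToTypes.map_comp_apply,
        ← op_comp, ← op_comp, d1, d2, op_comp, op_comp,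
        FunctorToTypes.map_comp_apply, FunctorToTypes.map_comp_apply, hab,
        ← FunctorToTypes.map_comp_apply, ← FunctorToTypes.map_comp_apply,
        ← op_comp, ← op_comp,
        pullback.condition (f := pullback.snd f z) (g := pullback.snd f z)]
  obtain ⟨y, hy, hyu⟩ := h1 a key
  have hzy : F.map z.op y = b := by
    apply h2
    have c1 : (pullback.fst f z ≫ f) = (pullback.snd f z ≫ z) := pullback.condition
    calc F.map (pullback.snd f z).op (F.map z.op y)
        = F.map (pullback.snd f z ≫ z).op y := by
          rw [op_comp, FunctorToTypes.map_comp_apply]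
      _ = F.map (pullback.fst f z ≫ f).op y := by rw [c1]
      _ = F.map (pullback.fst f z).op (F.map f.op y) := by
          rw [op_comp, FunctorToTypes.map_comp_apply]
      _ = F.map (pullback.snd f z).op b := by rw [hy, hab]
  exact ⟨y, ⟨hy, hzy⟩, fun y' hy' => hyu y' hy'.1⟩
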